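/- Let Σ ∈ ℝ^{q×q} be symmetric positive definite. Then the D-trace loss L_D(Θ, Σ) = (1/2)⟨Θ², Σ⟩_F − tr(Θ), viewed as a function on the space of symmetric q×q matrices, is strictly convex and has the unique minimizer Θ = Σ^{-1}. -/

import Mathlib

open Matrix

noncomputable section

/-- The Frobenius inner product `⟨M, N⟩_F = tr(Mᵀ N)`. -/
def frobInner {q : Type*} [Fintype q] (M N : Matrix q q ℝ) : ℝ := (Mᵀ * N).trace

/-- The D-trace loss `L_D(Θ, Σ) = (1/2)⟨Θ², Σ⟩_F − tr(Θ)`. -/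
def dtraceLoss {q : ℕ} (S T : Matrix (Fin q) (Fin q) ℝ) : ℝ :=
  (1 / 2) * frobInner (T * T) S - T.trace

namespace Stmt15Aux

variable {q : ℕ} (S : Matrix (Fin q) (Fin q) ℝ)

/-- The quadratic form `Q(A) = tr(Aᵀ S A)`. -/
def Qf (A : Matrix (Fin q) (Fin q) ℝ) : ℝ := (Aᵀ * S * A).trace

/-- The bilinear form `B(A,C) = tr(Aᵀ S C)`. -/
def Bf (A C : Matrix (Fin q) (Fin q) ℝ) : ℝ := (Aᵀ * S * C).trace

lemma Q_eq (A : Matrix (Fin q) (Fin q) ℝ) :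
    Qf S A = ∑ j, (fun i => A i j) ⬝ᵥ (S *ᵥ fun i => A i j) := by
  simp only [Qf, trace, diag, mul_apply, dotProduct, mulVec, Finset.sum_mul]
  refine Finset.sum_congr rfl fun j _ => ?_
  rw [Finset.sum_comm]
  simp only [transpose_apply, Finset.mul_sum]
  refine Finset.sum_congr rfl fun i _ => ?_
  refine Finset.sum_congr rfl fun k _ => ?_
  ring

lemma Q_pos (hS : S.PosDef) {A : Matrix (Fin q) (Fin q) ℝ} (hA : A ≠ 0) :
    0 < Qf S A := by
  rw [Q_eq]
  have h : ∃ j, (fun i => A i j) ≠ 0 := by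
    by_contra h
    push_neg at h
    apply hA
    ext i j
    have := congrFun (h j) i
    simpa using this
  obtain ⟨j, hj⟩ := h
  refine Finset.sum_pos' (fun k _ => ?_) ⟨j, Finset.mem_univ j, ?_⟩
  · have := hS.posSemidef.dotProduct_mulVec_nonneg (fun i => A i k)
    simpa using this
  · have := hS.dotProduct_mulVec_pos (x := fun i => A i j) hj
    simpa using this

lemma B_symm (A C : Matrix (Fin q) (Fin q) ℝ) (hSs : Sᵀ = S) : Bf S A C = Bf S C A := by
  unfold Bf
  rw [← trace_transpose (Aᵀ * S * C)]
  simp [transpose_mul, hSs, Matrix.mul_assoc]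

lemma Q_add (A C : Matrix (Fin q) (Fin q) ℝ) (hSs : Sᵀ = S) :
    Qf S (A + C) = Qf S A + Qf S C + 2 * Bf S A C := by
  unfold Qf Bf
  rw [transpose_add]
  simp only [Matrix.add_mul, Matrix.mul_add, trace_add]
  have : (Cᵀ * S * A).trace = (Aᵀ * S * C).trace := B_symm S C A hSs
  rw [this]; ring

lemma Q_smul (a : ℝ) (A : Matrix (Fin q) (Fin q) ℝ) : Qf S (a • A) = a ^ 2 * Qf S A := by
  unfold Qf
  rw [transpose_smul]
  simp [Matrix.smul_mul, Matrix.mul_smul, trace_smul]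
  ring

lemma B_smul (a b : ℝ) (A C : Matrix (Fin q) (Fin q) ℝ) :
    Bf S (a • A) (b • C) = a * b * Bf S A C := by
  unfold Bf
  rw [transpose_smul]
  simp [Matrix.smul_mul, Matrix.mul_smul, trace_smul]
  ring

lemma Q_sub (A C : Matrix (Fin q) (Fin q) ℝ) (hSs : Sᵀ = S) :
    Qf S (A - C) = Qf S A + Qf S C - 2 * Bf S A C := by
  have h1 : A - C = A + (-1 : ℝ) • C := by simp [sub_eq_add_neg]
  have h2 : Bf S A ((-1 : ℝ) • C) = - Bf S A C := by
    have := B_smul S 1 (-1) A C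
    simpa using this
  rw [h1, Q_add S A _ hSs, h2]
  have := Q_smul S (-1) C
  rw [this]; ring

lemma key (hS : S.PosDef) (T : Matrix (Fin q) (Fin q) ℝ) (hT : Tᵀ = T) :
    dtraceLoss S T = (1 / 2) * Qf S (T - S⁻¹) - (1 / 2) * (S⁻¹).trace := by
  have hSs : Sᵀ = S := (conjTranspose_eq_transpose_of_trivial S ▸ hS.1)
  have hdet : IsUnit S.det := hS.det_pos.ne'.isUnit
  have hinv : (S⁻¹)ᵀ = S⁻¹ := by rw [transpose_nonsing_inv, hSs]
  have hmul : S * S⁻¹ = 1 := mul_nonsing_inv S hdet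
  have hmul' : S⁻¹ * S = 1 := nonsing_inv_mul S hdet
  have hQ : Qf S (T - S⁻¹) = (T * S * T).trace - 2 * T.trace + (S⁻¹).trace := by
    unfold Qf
    rw [transpose_sub, hT, hinv]
    simp only [Matrix.sub_mul, Matrix.mul_sub, trace_sub]
    have e1 : T * S * S⁻¹ = T := by rw [Matrix.mul_assoc, hmul, Matrix.mul_one]
    have e2 : S⁻¹ * S * T = T := by rw [hmul', Matrix.one_mul]
    have e3 : S⁻¹ * S * S⁻¹ = S⁻¹ := by rw [hmul', Matrix.one_mul]
    rw [e1, e2, e3]; ring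
  have hF : frobInner (T * T) S = (T * S * T).trace := by
    unfold frobInner
    rw [transpose_mul, hT]
    rw [show T * T * S = T * (T * S) from Matrix.mul_assoc T T S,
      trace_mul_comm T (T * S), Matrix.mul_assoc]
  unfold dtraceLoss
  rw [hF, hQ]; ring

end Stmt15Aux

open Stmt15Aux in
/-- for `Σ` symmetric positive definite, the D-trace loss is strictly convex
on the space of symmetric matrices and has the unique minimizer `Σ⁻¹` there. -/
theorem stmt15 (q : ℕ) (S : Matrix (Fin q) (Fin q) ℝ) (hS : S.PosDef) :
    StrictConvexOn ℝ {T : Matrix (Fin q) (Fin q) ℝ | T.IsSymm} (fun T => dtraceLoss S T) ∧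
    (∀ T : Matrix (Fin q) (Fin q) ℝ, T.IsSymm → dtraceLoss S S⁻¹ ≤ dtraceLoss S T) ∧
    (∀ T : Matrix (Fin q) (Fin q) ℝ, T.IsSymm →
      (∀ T' : Matrix (Fin q) (Fin q) ℝ, T'.IsSymm → dtraceLoss S T ≤ dtraceLoss S T') →
      T = S⁻¹) := by
  have hSs : Sᵀ = S := (conjTranspose_eq_transpose_of_trivial S ▸ hS.1)
  have hdet : IsUnit S.det := hS.det_pos.ne'.isUnit
  have hinv : (S⁻¹)ᵀ = S⁻¹ := by rw [transpose_nonsing_inv, hSs]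
  have hmin : dtraceLoss S S⁻¹ = -(1 / 2) * (S⁻¹).trace := by
    rw [key S hS S⁻¹ hinv, sub_self]
    simp [Qf]
  refine ⟨?_, ?_, ?_⟩
  · constructor
    · intro x hx y hy a b ha hb hab
      simp only [Set.mem_setOf_eq, Matrix.IsSymm] at *
      rw [transpose_add, transpose_smul, transpose_smul, hx, hy]
    · intro x hx y hy hxy a b ha hb hab
      simp only [Set.mem_setOf_eq, Matrix.IsSymm] at hx hy
      have hone : a • S⁻¹ + b • S⁻¹ = S⁻¹ := by rw [← add_smul, hab, one_smul]
      have hxy' : a • x + b • y - S⁻¹ = a • (x - S⁻¹) + b • (y - S⁻¹) := by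
        conv_lhs => rw [← hone]
        rw [smul_sub, smul_sub]; abel
      have hmemsum : (a • x + b • y)ᵀ = a • x + b • y := by
        rw [transpose_add, transpose_smul, transpose_smul, hx, hy]
      set u := x - S⁻¹ with hu
      set v := y - S⁻¹ with hv
      have huv : u - v = x - y := by rw [hu, hv]; abel
      have hQuv : 0 < Qf S (u - v) := by
        rw [huv]; exact Q_pos S hS (sub_ne_zero.mpr hxy)
      have hexp : Qf S (a • u + b • v)
          = a ^ 2 * Qf S u + b ^ 2 * Qf S v + 2 * (a * b * Bf S u v) := by
        rw [Q_add S _ _ hSs, Q_smul, Q_smul, B_smul]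
      have hsub : Qf S (u - v) = Qf S u + Qf S v - 2 * Bf S u v := Q_sub S u v hSs
      have h1 : dtraceLoss S (a • x + b • y)
          = (1 / 2) * Qf S (a • u + b • v) - (1 / 2) * (S⁻¹).trace := by
        rw [key S hS _ hmemsum, hxy']
      have h2 := key S hS x hx
      have h3 := key S hS y hy
      rw [← hu] at h2
      rw [← hv] at h3
      have hb' : b = 1 - a := by linarith
      have hkey2 : a * Qf S u + b * Qf S v
          - (a ^ 2 * Qf S u + b ^ 2 * Qf S v + 2 * (a * b * Bf S u v))
          = a * b * Qf S (u - v) := by rw [hsub, hb']; ring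
      have hc : a * (S⁻¹).trace + b * (S⁻¹).trace = (S⁻¹).trace := by
        rw [← add_mul, hab, one_mul]
      have hpos : 0 < a * b * Qf S (u - v) := mul_pos (mul_pos ha hb) hQuv
      simp only [smul_eq_mul]
      rw [h1, h2, h3, hexp]
      nlinarith [hkey2, hc, hpos]
  · intro T hT
    rw [hmin, key S hS T hT]
    have : 0 ≤ Qf S (T - S⁻¹) := by
      rcases eq_or_ne (T - S⁻¹) 0 with h | h
      · simp [h, Qf]
      · exact (Q_pos S hS h).le
    linarith
  · intro T hT hmin'
    have h1 := hmin' S⁻¹ hinv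
    rw [hmin, key S hS T hT] at h1
    by_contra hne
    have : T - S⁻¹ ≠ 0 := sub_ne_zero.mpr hne
    have := Q_pos S hS this
    linarith
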